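/- A sequence (i_n)_{n∈ℕ} of positive integers is the itinerary of some x ∈ [0,∞) with T^k(x) ∉ ℤ for all k ∈ ℕ (i.e. T^n(x) ∈ (i_n − 1, i_n) for all n) if and only if both of the following hold: (1) i_{n+1} ≤ 4^{ℓ(i_n)} + 1 for all n ∈ ℕ; (2) there is no n ∈ ℕ with i_{n+k} = 1 for all k ∈ ℕ, and there are no n ∈ ℕ and m ∈ ℤ⁺ with i_{n+k} = 4^{m+k} + 1 for all k ∈ ℕ. -/

import Mathlib

open Set Filter

noncomputable section

/-- `ell n = min {k ∈ ℤ⁺ : n ≤ 4^k}`. -/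
def ell (n : ℕ) : ℕ := sInf {k : ℕ | 1 ≤ k ∧ n ≤ 4 ^ k}

/-- The value of the map `T` at the nonnegative integer `n`:
`0` if `n` is even and `4 ^ ℓ(n) + 1` if `n` is odd. -/
def Tval (n : ℕ) : ℝ := if Even n then 0 else 4 ^ ell n + 1

/-- `T : [0,∞) → [0,∞)` is the unique continuous map which is affine on each
integer interval `[n-1, n]` and takes the value `Tval n` at every nonnegative
integer `n`.  This is expressed by linear interpolation on each `[n, n+1]`. -/
def IsT (T : ℝ → ℝ) : Prop :=
  ∀ n : ℕ, ∀ x ∈ Set.Icc (n : ℝ) (n + 1),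
    T x = ((n : ℝ) + 1 - x) * Tval n + (x - (n : ℝ)) * Tval (n + 1)

/-- `(x_k)` is a `δ`-pseudo orbit of `T` in `[0,∞)`. -/
def IsPseudoOrbit (T : ℝ → ℝ) (δ : ℝ) (x : ℕ → ℝ) : Prop :=
  (∀ k, 0 ≤ x k) ∧ ∀ k, |x (k + 1) - T (x k)| < δ

/-! ### Auxiliary lemmas about `ell` -/

lemma ell_spec (n : ℕ) : 1 ≤ ell n ∧ n ≤ 4 ^ ell n := by
  have hne : (max 1 n) ∈ {k : ℕ | 1 ≤ k ∧ n ≤ 4 ^ k} := by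
    refine ⟨le_max_left _ _, le_trans (le_max_right 1 n) ?_⟩
    exact le_of_lt (Nat.lt_pow_self (by norm_num))
  exact Nat.sInf_mem ⟨_, hne⟩

lemma one_le_ell (n : ℕ) : 1 ≤ ell n := (ell_spec n).1
lemma le_pow_ell (n : ℕ) : n ≤ 4 ^ ell n := (ell_spec n).2

lemma ell_le {n k : ℕ} (h1 : 1 ≤ k) (h2 : n ≤ 4 ^ k) : ell n ≤ k :=
  Nat.sInf_le ⟨h1, h2⟩

lemma ell_eq {n k : ℕ} (h1 : 1 ≤ k) (hl : 4 ^ (k - 1) < n) (hu : n ≤ 4 ^ k) : ell n = k := by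
  refine le_antisymm (ell_le h1 hu) ?_
  by_contra h
  push_neg at h
  have h2 : ell n ≤ k - 1 := by omega
  have : n ≤ 4 ^ (k - 1) := le_trans (le_pow_ell n) (Nat.pow_le_pow_right (by norm_num) h2)
  omega

lemma ell_one : ell 1 = 1 := le_antisymm (ell_le le_rfl (by norm_num)) (one_le_ell 1)

lemma ell_pow_add_one (s : ℕ) : ell (4 ^ s + 1) = s + 1 := by
  have h4 : 1 ≤ (4:ℕ) ^ s := Nat.one_le_pow _ _ (by norm_num)
  refine ell_eq (by omega) (by simpa using Nat.lt_succ_self _) ?_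
  have : (4:ℕ) ^ (s + 1) = 4 * 4 ^ s := by ring
  omega

lemma ell_pow_add_two (s : ℕ) : ell (4 ^ s + 2) = s + 1 := by
  have h4 : 1 ≤ (4:ℕ) ^ s := Nat.one_le_pow _ _ (by norm_num)
  refine ell_eq (by omega) (by simp only [Nat.add_sub_cancel]; omega) ?_
  have : (4:ℕ) ^ (s + 1) = 4 * 4 ^ s := by ring
  omega

lemma even_pow_ell (n : ℕ) : Even (4 ^ ell n) :=
  Nat.even_pow.2 ⟨by decide, by have := one_le_ell n; omega⟩

lemma not_even_pred {j : ℕ} (hj : 1 ≤ j) (he : Even j) : ¬ Even (j - 1) := by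
  rw [Nat.even_sub hj]
  simp [he, Nat.not_even_one]

lemma ell_even_pred {j : ℕ} (hj : 1 ≤ j) (he : Even j) : ell (j - 1) = ell j := by
  refine le_antisymm (ell_le (one_le_ell j) (le_trans (by omega) (le_pow_ell j))) ?_
  refine ell_le (one_le_ell (j - 1)) ?_
  have h1 : j - 1 ≤ 4 ^ ell (j - 1) := le_pow_ell (j - 1)
  have h2 : j - 1 ≠ 4 ^ ell (j - 1) := by
    intro h
    exact not_even_pred hj he (h ▸ even_pow_ell (j - 1))
  omega

/-! ### The slope `Mr` and basic facts about `T` -/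

/-- The (real) height `4 ^ ℓ(i) + 1`. -/
def Mr (i : ℕ) : ℝ := 4 ^ ell i + 1

lemma five_le_Mr (i : ℕ) : 5 ≤ Mr i := by
  have : (4:ℝ) ^ 1 ≤ 4 ^ ell i := pow_le_pow_right₀ (by norm_num) (one_le_ell i)
  simp only [Mr]
  nlinarith

lemma Mr_pos (i : ℕ) : 0 < Mr i := lt_of_lt_of_le (by norm_num) (five_le_Mr i)

lemma Mr_cast (i : ℕ) : ((4 ^ ell i + 1 : ℕ) : ℝ) = Mr i := by
  unfold Mr; push_cast; ring

lemma Tval_even {n : ℕ} (h : Even n) : Tval n = 0 := if_pos h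
lemma Tval_odd {n : ℕ} (h : ¬ Even n) : Tval n = Mr n := if_neg h

lemma T_nat {T : ℝ → ℝ} (hT : IsT T) (j : ℕ) : T j = Tval j := by
  have h := hT j j ⟨le_refl _, by linarith⟩
  have h1 : ((j:ℝ) + 1 - j) = 1 := by ring
  have h2 : ((j:ℝ) - j) = 0 := by ring
  rw [h, h1, h2]; ring

lemma T_on {T : ℝ → ℝ} (hT : IsT T) {i : ℕ} (hi : 1 ≤ i) {y : ℝ}
    (hy : y ∈ Set.Icc ((i:ℝ) - 1) i) :
    T y = if Even i then ((i:ℝ) - y) * Mr i else (y - ((i:ℝ) - 1)) * Mr i := by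
  have hcast : ((i - 1 : ℕ) : ℝ) = (i:ℝ) - 1 := by
    rw [Nat.cast_sub hi, Nat.cast_one]
  have hsum : (i - 1) + 1 = i := Nat.sub_add_cancel hi
  have h := hT (i - 1) y (by rw [hcast]; exact ⟨hy.1, by have := hy.2; linarith⟩)
  rw [hsum, hcast] at h
  by_cases he : Even i
  · have ho : ¬ Even (i - 1) := not_even_pred hi he
    rw [h, Tval_even he, Tval_odd ho]
    have : Mr (i - 1) = Mr i := by simp [Mr, ell_even_pred hi he]
    rw [this, if_pos he]; ring
  · have ho : Even (i - 1) := by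
      rw [Nat.even_sub hi]; simp [he]
    rw [h, Tval_odd he, Tval_even ho, if_neg he]; ring

lemma T_mem_open {T : ℝ → ℝ} (hT : IsT T) {i : ℕ} (hi : 1 ≤ i) {y : ℝ}
    (hy : y ∈ Set.Ioo ((i:ℝ) - 1) i) : T y ∈ Set.Ioo 0 (Mr i) := by
  have h := T_on hT hi (Set.Ioo_subset_Icc_self hy)
  have h5 := five_le_Mr i
  obtain ⟨hy1, hy2⟩ := hy
  rw [h]
  split_ifs with he <;> constructor <;> nlinarith

/-! ### Inverse branches -/

/-- Inverse branch of `T` on `[i-1, i]`. -/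
def gbr (i : ℕ) : ℝ → ℝ := fun t =>
  if Even i then (i:ℝ) - t / Mr i else ((i:ℝ) - 1) + t / Mr i

lemma gbr_cont (i : ℕ) : Continuous (gbr i) := by
  unfold gbr
  by_cases h : Even i <;> simp only [h, if_true, if_false] <;> fun_prop

lemma gbr_mem {i : ℕ} {t : ℝ} (ht : t ∈ Set.Icc 0 (Mr i)) :
    gbr i t ∈ Set.Icc ((i:ℝ) - 1) i := by
  have hM := Mr_pos i
  have h1 : 0 ≤ t / Mr i := div_nonneg ht.1 hM.le
  have h2 : t / Mr i ≤ 1 := (div_le_one hM).2 ht.2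
  unfold gbr
  split_ifs <;> constructor <;> linarith

lemma T_gbr {T : ℝ → ℝ} (hT : IsT T) {i : ℕ} (hi : 1 ≤ i) {t : ℝ}
    (ht : t ∈ Set.Icc 0 (Mr i)) : T (gbr i t) = t := by
  rw [T_on hT hi (gbr_mem ht)]
  have hM := (Mr_pos i).ne'
  unfold gbr
  split_ifs with he
  · field_simp; ring
  · field_simp
    ring

/-! ### Iterated inverse branches -/

def Gbr : (ℕ → ℕ) → ℕ → ℝ → ℝ
  | _, 0 => id
  | i, n + 1 => gbr (i 0) ∘ Gbr (fun k => i (k + 1)) n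

lemma Gbr_cont (n : ℕ) : ∀ i : ℕ → ℕ, Continuous (Gbr i n) := by
  induction n with
  | zero => intro i; exact continuous_id
  | succ n ih => intro i; exact (gbr_cont (i 0)).comp (ih _)

/-- If the compatibility condition holds, an endpoint-interval point is mapped
into `Icc 0 (Mr (i 0))`. -/
lemma icc_subset_dom {i : ℕ → ℕ} (hp : ∀ n, 1 ≤ i n)
    (hc : ∀ n, i (n + 1) ≤ 4 ^ ell (i n) + 1) {u : ℝ}
    (hu : u ∈ Set.Icc ((i 1 : ℝ) - 1) (i 1)) : u ∈ Set.Icc 0 (Mr (i 0)) := by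
  have h1 : (1:ℝ) ≤ (i 1 : ℝ) := by exact_mod_cast hp 1
  have h2 : (i 1 : ℝ) ≤ Mr (i 0) := by
    rw [← Mr_cast]; exact_mod_cast hc 0
  exact ⟨by linarith [hu.1], le_trans hu.2 h2⟩

lemma Gbr_mem (n : ℕ) : ∀ i : ℕ → ℕ, (∀ k, 1 ≤ i k) → (∀ k, i (k + 1) ≤ 4 ^ ell (i k) + 1) →
    ∀ t ∈ Set.Icc ((i n : ℝ) - 1) (i n), Gbr i n t ∈ Set.Icc ((i 0 : ℝ) - 1) (i 0) := by
  induction n with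
  | zero => intro i _ _ t ht; exact ht
  | succ n ih =>
    intro i hp hc t ht
    have hu := ih (fun k => i (k + 1)) (fun k => hp (k + 1)) (fun k => hc (k + 1)) t ht
    exact gbr_mem (icc_subset_dom hp hc hu)

lemma Gbr_iter {T : ℝ → ℝ} (hT : IsT T) (k : ℕ) :
    ∀ n, k ≤ n → ∀ i : ℕ → ℕ, (∀ j, 1 ≤ i j) → (∀ j, i (j + 1) ≤ 4 ^ ell (i j) + 1) →
    ∀ t ∈ Set.Icc ((i n : ℝ) - 1) (i n),
      T^[k] (Gbr i n t) ∈ Set.Icc ((i k : ℝ) - 1) (i k) := by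
  induction k with
  | zero =>
    intro n _ i hp hc t ht
    simpa using Gbr_mem n i hp hc t ht
  | succ k ih =>
    intro n hkn i hp hc t ht
    obtain ⟨n', rfl⟩ : ∃ n', n = n' + 1 := ⟨n - 1, by omega⟩
    have hu := Gbr_mem n' (fun j => i (j + 1)) (fun j => hp (j + 1)) (fun j => hc (j + 1)) t ht
    have hTg : T (Gbr i (n' + 1) t) = Gbr (fun j => i (j + 1)) n' t := by
      show T (gbr (i 0) (Gbr (fun j => i (j + 1)) n' t)) = _
      exact T_gbr hT (hp 0) (icc_subset_dom hp hc hu)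
    rw [Function.iterate_succ_apply, hTg]
    exact ih n' (by omega) (fun j => i (j + 1)) (fun j => hp (j + 1)) (fun j => hc (j + 1)) t ht

lemma Gbr_nested (n : ℕ) : ∀ i : ℕ → ℕ, (∀ k, 1 ≤ i k) → (∀ k, i (k + 1) ≤ 4 ^ ell (i k) + 1) →
    Gbr i (n + 1) '' Set.Icc ((i (n + 1) : ℝ) - 1) (i (n + 1)) ⊆
      Gbr i n '' Set.Icc ((i n : ℝ) - 1) (i n) := by
  induction n with
  | zero =>
    intro i hp hc x hx
    obtain ⟨t, ht, rfl⟩ := hx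
    refine ⟨gbr (i 0) t, ?_, rfl⟩
    exact gbr_mem (icc_subset_dom hp hc ht)
  | succ n ih =>
    intro i hp hc
    have h1 : Gbr i (n + 2) = gbr (i 0) ∘ Gbr (fun k => i (k + 1)) (n + 1) := rfl
    have h2 : Gbr i (n + 1) = gbr (i 0) ∘ Gbr (fun k => i (k + 1)) n := rfl
    rw [h1, h2, Set.image_comp, Set.image_comp]
    exact Set.image_mono (ih (fun k => i (k + 1)) (fun k => hp (k + 1)) (fun k => hc (k + 1)))

/-! ### Main theorem -/

/-- A sequence of positive integers `(i n)` is the itinerary of some point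
`x ∈ [0,∞)` whose orbit never hits an integer if and only if
(1) `i (n+1) ≤ 4 ^ ℓ(i n) + 1` for all `n`, and
(2) no tail of the sequence is constantly `1`, and no tail has the form
`4^{m+k} + 1` (k = 0, 1, 2, …) for some positive integer `m`. -/
theorem itinerary_characterization (T : ℝ → ℝ) (hT : IsT T)
    (i : ℕ → ℕ) (hpos : ∀ n : ℕ, 1 ≤ i n) :
    (∃ x : ℝ, 0 ≤ x ∧ ∀ n : ℕ, T^[n] x ∈ Set.Ioo ((i n : ℝ) - 1) (i n)) ↔
      ((∀ n : ℕ, i (n + 1) ≤ 4 ^ ell (i n) + 1) ∧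
        (¬ ∃ n : ℕ, ∀ k : ℕ, i (n + k) = 1) ∧
        ¬ ∃ n : ℕ, ∃ m : ℕ, 1 ≤ m ∧ ∀ k : ℕ, i (n + k) = 4 ^ (m + k) + 1) := by
  constructor
  · rintro ⟨x, hx0, hx⟩
    refine ⟨?_, ?_, ?_⟩
    · -- compatibility
      intro n
      have h1 : T^[n + 1] x ∈ Set.Ioo 0 (Mr (i n)) := by
        rw [Function.iterate_succ_apply']
        exact T_mem_open hT (hpos n) (hx n)
      have h2 := (hx (n + 1)).1
      have h3 : ((i (n + 1) : ℝ)) < Mr (i n) + 1 := by linarith [h1.2]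
      have h4 : ((i (n + 1) : ℝ)) < (((4 ^ ell (i n) + 1 : ℕ) : ℝ)) + 1 := by
        rw [Mr_cast]; exact h3
      have h5 : i (n + 1) < 4 ^ ell (i n) + 1 + 1 := by exact_mod_cast h4
      omega
    · -- no constant-1 tail
      rintro ⟨n, hn⟩
      have hio : ∀ k, T^[n + k] x ∈ Set.Ioo (0:ℝ) 1 := by
        intro k
        have := hx (n + k)
        rw [hn k] at this
        simpa using this
      have hstep : ∀ k, T^[n + (k + 1)] x = 5 * T^[n + k] x := by
        intro k
        have : n + (k + 1) = (n + k) + 1 := by omega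
        rw [this, Function.iterate_succ_apply']
        have h1 : T^[n + k] x ∈ Set.Icc ((1:ℝ) - 1) 1 := by
          have := hio k; exact ⟨by linarith [this.1], this.2.le⟩
        have := T_on hT (le_refl 1) (i := 1) (by simpa using h1)
        rw [this, if_neg (by simp)]
        have : Mr 1 = 5 := by simp [Mr, ell_one]; norm_num
        rw [this]; push_cast; ring
      have hgrow : ∀ k, T^[n + k] x = 5 ^ k * T^[n] x := by
        intro k
        induction k with
        | zero => simp
        | succ k ih => rw [hstep k, ih]; ring
      have hy0 : 0 < T^[n] x := by simpa using (hio 0).1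
      obtain ⟨k, hk⟩ := pow_unbounded_of_one_lt (R := ℝ) (1 / T^[n] x) (by norm_num : (1:ℝ) < 5)
      have : (1:ℝ) < 5 ^ k * T^[n] x := by
        rw [div_lt_iff₀ hy0] at hk; linarith
      have := (hio k).2
      rw [hgrow k] at this
      linarith
    · -- no escalating tail
      rintro ⟨n, m, hm, hmk⟩
      set d : ℕ → ℝ := fun k => (4:ℝ) ^ (m + k) + 1 - T^[n + k] x with hd
      have hio : ∀ k, d k ∈ Set.Ioo (0:ℝ) 1 := by
        intro k
        have h := hx (n + k)
        rw [hmk k] at h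
        have hc : ((4 ^ (m + k) + 1 : ℕ) : ℝ) = (4:ℝ) ^ (m + k) + 1 := by push_cast; ring
        rw [hc] at h
        constructor
        · show (0:ℝ) < (4:ℝ) ^ (m + k) + 1 - T^[n + k] x
          linarith [h.2]
        · show (4:ℝ) ^ (m + k) + 1 - T^[n + k] x < 1
          linarith [h.1]
      have hstep : ∀ k, d (k + 1) = ((4:ℝ) ^ (m + k + 1) + 1) * d k := by
        intro k
        have hidx : n + (k + 1) = (n + k) + 1 := by omega
        have hoddm : ¬ Even (4 ^ (m + k) + 1) := by
          have : Even ((4:ℕ) ^ (m + k)) := Nat.even_pow.2 ⟨by decide, by omega⟩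
          simp [Nat.even_add_one, this]
        have hI : T^[n + k] x ∈ Set.Icc (((4 ^ (m + k) + 1 : ℕ) : ℝ) - 1) ((4 ^ (m + k) + 1 : ℕ) : ℝ) := by
          have h := hx (n + k); rw [hmk k] at h
          exact ⟨h.1.le, h.2.le⟩
        have hTy := T_on hT (Nat.le_add_left 1 _) hI
        rw [if_neg hoddm] at hTy
        have hMr : Mr (4 ^ (m + k) + 1) = (4:ℝ) ^ (m + k + 1) + 1 := by
          simp [Mr, ell_pow_add_one]
        have hcast : ((4 ^ (m + k) + 1 : ℕ) : ℝ) = (4:ℝ) ^ (m + k) + 1 := by push_cast; ring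
        show (4:ℝ) ^ (m + (k + 1)) + 1 - T^[n + (k + 1)] x =
          ((4:ℝ) ^ (m + k + 1) + 1) * ((4:ℝ) ^ (m + k) + 1 - T^[n + k] x)
        rw [hidx, Function.iterate_succ_apply', hTy, hMr, hcast]
        have hmk : m + (k + 1) = m + k + 1 := by omega
        rw [hmk]; ring
      have hgrow : ∀ k, 5 ^ k * d 0 ≤ d k := by
        intro k
        induction k with
        | zero => simp
        | succ k ih =>
          have h4 : (4:ℝ) ^ 1 ≤ (4:ℝ) ^ (m + k + 1) := pow_le_pow_right₀ (by norm_num) (by omega)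
          have hdk : 0 < d k := (hio k).1
          rw [hstep k]
          have h5 : (5:ℝ) * d k ≤ ((4:ℝ) ^ (m + k + 1) + 1) * d k := by nlinarith
          have : (5:ℝ) ^ (k + 1) * d 0 ≤ 5 * d k := by
            have : (5:ℝ) ^ (k + 1) * d 0 = 5 * (5 ^ k * d 0) := by ring
            rw [this]; nlinarith
          linarith
      have hd0 : 0 < d 0 := (hio 0).1
      obtain ⟨k, hk⟩ := pow_unbounded_of_one_lt (R := ℝ) (1 / d 0) (by norm_num : (1:ℝ) < 5)
      have h1 : (1:ℝ) < 5 ^ k * d 0 := by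
        rw [div_lt_iff₀ hd0] at hk; linarith
      have := (hio k).2
      linarith [hgrow k]
  · rintro ⟨hc, h2a, h2b⟩
    -- construct the point x via nested compact sets
    set K : ℕ → Set ℝ := fun n => Gbr i n '' Set.Icc ((i n : ℝ) - 1) (i n) with hK
    have hKne : ∀ n, (K n).Nonempty := by
      intro n
      exact (Set.nonempty_Icc.2 (by linarith)).image _
    have hKc : ∀ n, IsCompact (K n) := fun n => isCompact_Icc.image (Gbr_cont n i)
    have hKmono : ∀ n, K (n + 1) ⊆ K n := fun n => Gbr_nested n i hpos hc
    obtain ⟨x, hxmem⟩ := IsCompact.nonempty_iInter_of_sequence_nonempty_isCompact_isClosed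
      K hKmono hKne (hKc 0) (fun n => (hKc n).isClosed)
    have hxk : ∀ k, T^[k] x ∈ Set.Icc ((i k : ℝ) - 1) (i k) := by
      intro k
      have hxK : x ∈ K k := Set.mem_iInter.1 hxmem k
      obtain ⟨t, ht, rfl⟩ := hxK
      exact Gbr_iter hT k k le_rfl i hpos hc t ht
    have hx0 : 0 ≤ x := by
      have := (hxk 0).1
      simp only [Function.iterate_zero, id] at this
      have h1 : (1:ℝ) ≤ (i 0 : ℝ) := by exact_mod_cast hpos 0
      linarith
    refine ⟨x, hx0, ?_⟩
    by_contra hcon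
    push_neg at hcon
    obtain ⟨n, hn⟩ := hcon
    -- T^[n] x is an integer
    have hend : ∃ j : ℕ, T^[n] x = (j : ℝ) := by
      have h := hxk n
      rcases eq_or_lt_of_le h.1 with h1 | h1
      · exact ⟨i n - 1, by rw [← h1, Nat.cast_sub (hpos n)]; simp⟩
      rcases eq_or_lt_of_le h.2 with h2 | h2
      · exact ⟨i n, h2⟩
      · exact absurd ⟨h1, h2⟩ hn
    obtain ⟨j, hj⟩ := hend
    by_cases hje : Even j
    · -- orbit falls to 0, tail of 1's
      have hzero : ∀ k, T^[n + 1 + k] x = 0 := by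
        intro k
        induction k with
        | zero =>
          simp only [Nat.add_zero]
          rw [Function.iterate_succ_apply', hj, T_nat hT, Tval_even hje]
        | succ k ih =>
          have : n + 1 + (k + 1) = (n + 1 + k) + 1 := by omega
          rw [this, Function.iterate_succ_apply', ih]
          have h0 : T ((0:ℕ):ℝ) = Tval 0 := T_nat hT 0
          simpa [Tval_even (Even.zero)] using h0
      have hone : ∀ k, i (n + 1 + k) = 1 := by
        intro k
        have h := (hxk (n + 1 + k)).1
        rw [hzero k] at h
        have : (i (n + 1 + k) : ℝ) ≤ 1 := by linarith
        have h2 : i (n + 1 + k) ≤ 1 := by exact_mod_cast this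
        have := hpos (n + 1 + k)
        omega
      exact h2a ⟨n + 1, hone⟩
    · -- orbit escalates to 4^m + 1 tail
      set m₀ := ell j with hm₀
      have hm₀1 : 1 ≤ m₀ := one_le_ell j
      have hval : ∀ k, T^[n + 1 + k] x = ((4 ^ (m₀ + k) + 1 : ℕ) : ℝ) := by
        intro k
        induction k with
        | zero =>
          simp only [Nat.add_zero]
          rw [Function.iterate_succ_apply', hj, T_nat hT, Tval_odd hje]
          rw [← Mr_cast]
        | succ k ih =>
          have hidx : n + 1 + (k + 1) = (n + 1 + k) + 1 := by omega
          rw [hidx, Function.iterate_succ_apply', ih, T_nat hT]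
          have hodd : ¬ Even (4 ^ (m₀ + k) + 1) := by
            have : Even ((4:ℕ) ^ (m₀ + k)) := Nat.even_pow.2 ⟨by decide, by omega⟩
            simp [Nat.even_add_one, this]
          rw [Tval_odd hodd]
          have h1 : Mr (4 ^ (m₀ + k) + 1) = (4:ℝ) ^ (m₀ + k + 1) + 1 := by
            simp [Mr, ell_pow_add_one]
          rw [h1]
          push_cast
          have hmk : m₀ + (k + 1) = m₀ + k + 1 := by omega
          rw [hmk]
      have hidx2 : ∀ k, i (n + 1 + k) = 4 ^ (m₀ + k) + 1 ∨ i (n + 1 + k) = 4 ^ (m₀ + k) + 2 := by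
        intro k
        have h := hxk (n + 1 + k)
        rw [hval k] at h
        have h1 : (i (n + 1 + k) : ℝ) - 1 ≤ ((4 ^ (m₀ + k) + 1 : ℕ) : ℝ) := h.1
        have h2 : ((4 ^ (m₀ + k) + 1 : ℕ) : ℝ) ≤ (i (n + 1 + k) : ℝ) := h.2
        have h1' : i (n + 1 + k) ≤ 4 ^ (m₀ + k) + 1 + 1 := by
          have : (i (n + 1 + k) : ℝ) ≤ ((4 ^ (m₀ + k) + 1 + 1 : ℕ) : ℝ) := by push_cast; push_cast at h1; linarith
          exact_mod_cast this
        have h2' : 4 ^ (m₀ + k) + 1 ≤ i (n + 1 + k) := by exact_mod_cast h2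
        omega
      have hforce : ∀ k, i (n + 2 + k) = 4 ^ (m₀ + 1 + k) + 1 := by
        intro k
        have hell : ell (i (n + 1 + k)) = m₀ + k + 1 := by
          rcases hidx2 k with h | h <;> rw [h]
          · exact ell_pow_add_one _
          · exact ell_pow_add_two _
        have hb := hc (n + 1 + k)
        rw [hell] at hb
        have hidx' : n + 1 + k + 1 = n + 1 + (k + 1) := by omega
        rw [hidx'] at hb
        have := hidx2 (k + 1)
        have hmk : m₀ + (k + 1) = m₀ + k + 1 := by omega
        rw [hmk] at this
        have heq : n + 2 + k = n + 1 + (k + 1) := by omega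
        rw [heq]
        have hm1 : m₀ + 1 + k = m₀ + k + 1 := by omega
        rw [hm1]
        omega
      exact h2b ⟨n + 2, m₀ + 1, by omega, hforce⟩

end
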